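/- Let K be an algebraically closed field. Call a subgroup H of the multiplicative group Kˣ radical if whenever u ∈ Kˣ and u^n ∈ H for some integer n ≥ 1, then u ∈ H. If U and V are radical subgroups of Kˣ, then the product set U·V = {u·v : u ∈ U, v ∈ V} (which is the subgroup generated by U and V) is again a radical subgroup of Kˣ. -/
import Mathlib


open Pointwise

/-- A subgroup `U` of `Kˣ` is radical if whenever `u^n ∈ U` for some `n ≥ 1`,
then `u ∈ U`. -/
def IsRadicalSubgroup {K : Type*} [Field K] (U : Subgroup Kˣ) : Prop :=
  ∀ (u : Kˣ) (n : ℕ), 1 ≤ n → u ^ n ∈ U → u ∈ U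

/-- Let `K` be an algebraically closed field. If `U` and `V` are radical subgroups of
`Kˣ`, then the product set `U·V` — which is the subgroup generated by `U` and `V` —
is again a radical subgroup of `Kˣ`. -/
theorem mul_radical_subgroups (K : Type*) [Field K] [IsAlgClosed K]
    (U V : Subgroup Kˣ) (hU : IsRadicalSubgroup U) (hV : IsRadicalSubgroup V) :
    (U : Set Kˣ) * (V : Set Kˣ) = ((U ⊔ V : Subgroup Kˣ) : Set Kˣ) ∧
      ∀ (u : Kˣ) (n : ℕ), 1 ≤ n → u ^ n ∈ (U : Set Kˣ) * (V : Set Kˣ) →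
        u ∈ (U : Set Kˣ) * (V : Set Kˣ) := by
  constructor
  · exact (Subgroup.mul_normal U V).symm
  · rintro u n hn ⟨a, ha, b, hb, hab⟩
    obtain ⟨c₀, hc₀⟩ := IsAlgClosed.exists_pow_nat_eq ((a : Kˣ) : K) hn
    have hc₀ne : c₀ ≠ 0 := by
      intro h
      apply (a : Kˣ).ne_zero
      rw [← hc₀, h, zero_pow (Nat.pos_of_ne_zero (by omega)).ne']
    set c : Kˣ := Units.mk0 c₀ hc₀ne with hc
    have hcn : c ^ n = a := by
      ext
      push_cast
      exact hc₀
    have hcU : c ∈ U := hU c n hn (hcn ▸ ha)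
    have hV' : u * c⁻¹ ∈ V := by
      apply hV _ n hn
      have : (u * c⁻¹) ^ n = b := by
        rw [mul_pow, inv_pow, hcn, ← hab]
        simp [mul_comm]
      exact this ▸ hb
    exact ⟨c, hcU, u * c⁻¹, hV', by rw [mul_comm]; group⟩
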